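/- Let D_∞ = ⟨r, t | r² = t² = e⟩ and x, y ∈ ℂ×. The representation ϱ_{x,y} on ℂβ_r ⊕ ℂβ_t defined by r·β_r = -β_r, r·β_t = β_t + xβ_r, t·β_t = -β_t, t·β_r = β_r + yβ_t is irreducible if and only if xy ≠ 4. -/

import Mathlib

open DihedralGroup

/-- For `x, y ∈ ℂ×`, the representation `ϱ_{x,y}` of the infinite dihedral group
`D_∞ = DihedralGroup 0` is irreducible iff `xy ≠ 4`. -/
theorem varrho_irreducible_iff (x y : ℂ) (hx : x ≠ 0) (hy : y ≠ 0)
    (βr βt : Fin 2 → ℂ) (hβr : βr = Pi.single 0 1) (hβt : βt = Pi.single 1 1)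
    (ρ : Representation ℂ (DihedralGroup 0) (Fin 2 → ℂ))
    (hrr : ρ (sr 0) βr = -βr) (hrt : ρ (sr 0) βt = βt + x • βr)
    (htt : ρ (sr 1) βt = -βt) (htr : ρ (sr 1) βr = βr + y • βt) :
    (∀ p : Submodule ℂ (Fin 2 → ℂ), (∀ (g : DihedralGroup 0), ∀ v ∈ p, ρ g v ∈ p) →
      p = ⊥ ∨ p = ⊤) ↔ x * y ≠ 4 := by
  have hdecomp : ∀ w : Fin 2 → ℂ, w = w 0 • βr + w 1 • βt := by
    intro w; funext i; fin_cases i <;> simp [hβr, hβt]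
  have hsr0 : ∀ w : Fin 2 → ℂ, ρ (sr 0) w = (x * w 1 - w 0) • βr + w 1 • βt := by
    intro w
    calc ρ (sr 0) w = ρ (sr 0) (w 0 • βr + w 1 • βt) := by rw [← hdecomp w]
      _ = w 0 • ρ (sr 0) βr + w 1 • ρ (sr 0) βt := by rw [map_add, map_smul, map_smul]
      _ = w 0 • (-βr) + w 1 • (βt + x • βr) := by rw [hrr, hrt]
      _ = (x * w 1 - w 0) • βr + w 1 • βt := by module
  have hsr1 : ∀ w : Fin 2 → ℂ, ρ (sr 1) w = w 0 • βr + (y * w 0 - w 1) • βt := by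
    intro w
    calc ρ (sr 1) w = ρ (sr 1) (w 0 • βr + w 1 • βt) := by rw [← hdecomp w]
      _ = w 0 • ρ (sr 1) βr + w 1 • ρ (sr 1) βt := by rw [map_add, map_smul, map_smul]
      _ = w 0 • (βr + y • βt) + w 1 • (-βt) := by rw [htr, htt]
      _ = w 0 • βr + (y * w 0 - w 1) • βt := by module
  constructor
  · intro hirr hxy
    set v : Fin 2 → ℂ := (x / 2) • βr + βt with hv
    have hv0c : v 0 = x / 2 := by simp [hv, hβr, hβt]
    have hv1c : v 1 = 1 := by simp [hv, hβr, hβt]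
    have hfix0 : ρ (sr 0) v = v := by
      rw [hsr0 v, hv0c, hv1c, hv]; module
    have hfix1 : ρ (sr 1) v = v := by
      rw [hsr1 v, hv0c, hv1c, hv]
      have : y * (x / 2) - 1 = 1 := by linear_combination hxy / 2
      rw [this]; module
    let S : Subgroup (DihedralGroup 0) :=
      { carrier := {g | ρ g v = v}
        one_mem' := by simp
        mul_mem' := fun {a b} ha hb => by
          simp only [Set.mem_setOf_eq] at *
          rw [map_mul, Module.End.mul_apply, hb, ha]
        inv_mem' := fun {a} ha => by
          simp only [Set.mem_setOf_eq] at *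
          conv_lhs => rw [← ha]
          rw [← Module.End.mul_apply, ← map_mul, inv_mul_cancel, map_one,
            Module.End.one_apply] }
    have hS0 : sr 0 ∈ S := hfix0
    have hS1 : sr 1 ∈ S := hfix1
    have hSr1 : (r 1 : DihedralGroup 0) ∈ S := by
      have h : (r 1 : DihedralGroup 0) = sr 0 * sr 1 := by rw [sr_mul_sr, sub_zero]
      rw [h]; exact S.mul_mem hS0 hS1
    have hSrm1 : (r (-1) : DihedralGroup 0) ∈ S := by
      have h : (r (-1) : DihedralGroup 0) = sr 1 * sr 0 := by rw [sr_mul_sr, zero_sub]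
      rw [h]; exact S.mul_mem hS1 hS0
    have hr' : ∀ i : ZMod 0, (r i : DihedralGroup 0) ∈ S := by
      intro i
      induction i using Int.induction_on with
      | zero => exact one_def ▸ S.one_mem
      | succ k ih =>
        have h : (r ((k : ZMod 0) + 1) : DihedralGroup 0) = r k * r 1 := (r_mul_r _ _).symm
        exact h ▸ S.mul_mem ih hSr1
      | pred k ih =>
        have h : (r (-(k : ZMod 0) - 1) : DihedralGroup 0) = r (-(k : ZMod 0)) * r (-1) := by
          rw [r_mul_r]; ring_nf
        exact h ▸ S.mul_mem ih hSrm1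
    have hsr' : ∀ i : ZMod 0, (sr i : DihedralGroup 0) ∈ S := by
      intro i
      have h : (sr i : DihedralGroup 0) = r (1 - i) * sr 1 := by rw [r_mul_sr]; ring_nf
      exact h ▸ S.mul_mem (hr' _) hS1
    have hfix : ∀ g : DihedralGroup 0, ρ g v = v := by
      intro g
      cases g with
      | r i => exact hr' i
      | sr i => exact hsr' i
    have hinv : ∀ (g : DihedralGroup 0), ∀ w ∈ (ℂ ∙ v), ρ g w ∈ (ℂ ∙ v) := by
      intro g w hw
      rw [Submodule.mem_span_singleton] at hw ⊢
      obtain ⟨c, rfl⟩ := hw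
      exact ⟨c, by rw [map_smul, hfix g]⟩
    rcases hirr (ℂ ∙ v) hinv with h | h
    · have hvmem : v ∈ (ℂ ∙ v) := Submodule.mem_span_singleton_self v
      rw [h, Submodule.mem_bot] at hvmem
      have := congrFun hvmem 1
      rw [hv1c] at this
      simp at this
    · have hβrmem : βr ∈ (ℂ ∙ v) := h ▸ Submodule.mem_top
      rw [Submodule.mem_span_singleton] at hβrmem
      obtain ⟨c, hc⟩ := hβrmem
      have h1 := congrFun hc 1
      have h0 := congrFun hc 0
      simp only [Pi.smul_apply, smul_eq_mul, hv1c, hv0c, hβr] at h1 h0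
      simp at h1 h0
      rw [h1] at h0
      simp at h0
  · intro hxy p hp
    by_cases hbot : p = ⊥
    · exact Or.inl hbot
    · right
      obtain ⟨v, hvp, hvne⟩ := Submodule.exists_mem_ne_zero_of_ne_bot hbot
      have hA : (x * v 1 - 2 * v 0) • βr ∈ p := by
        have h : ρ (sr 0) v - v = (x * v 1 - 2 * v 0) • βr := by
          rw [hsr0 v]; funext i; fin_cases i <;> simp [hβr, hβt] <;> ring
        rw [← h]
        exact sub_mem (hp (sr 0) v hvp) hvp
      have hB : (y * v 0 - 2 * v 1) • βt ∈ p := by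
        have h : ρ (sr 1) v - v = (y * v 0 - 2 * v 1) • βt := by
          rw [hsr1 v]; funext i; fin_cases i <;> simp [hβr, hβt] <;> ring
        rw [← h]
        exact sub_mem (hp (sr 1) v hvp) hvp
      have top_of_βr : βr ∈ p → p = ⊤ := by
        intro hβrp
        have hyt : y • βt ∈ p := by
          have h : y • βt = ρ (sr 1) βr - βr := by rw [htr]; module
          rw [h]; exact sub_mem (hp (sr 1) βr hβrp) hβrp
        have hβtp : βt ∈ p := by
          have := p.smul_mem y⁻¹ hyt
          rwa [smul_smul, inv_mul_cancel₀ hy, one_smul] at this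
        rw [Submodule.eq_top_iff']
        intro w
        rw [hdecomp w]
        exact add_mem (p.smul_mem _ hβrp) (p.smul_mem _ hβtp)
      have top_of_βt : βt ∈ p → p = ⊤ := by
        intro hβtp
        have hxr : x • βr ∈ p := by
          have h : x • βr = ρ (sr 0) βt - βt := by rw [hrt]; module
          rw [h]; exact sub_mem (hp (sr 0) βt hβtp) hβtp
        have hβrp : βr ∈ p := by
          have := p.smul_mem x⁻¹ hxr
          rwa [smul_smul, inv_mul_cancel₀ hx, one_smul] at this
        exact top_of_βr hβrp
      by_cases h1 : x * v 1 - 2 * v 0 = 0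
      · by_cases h2 : y * v 0 - 2 * v 1 = 0
        · exfalso
          have h3 : v 0 * (x * y - 4) = 0 := by linear_combination x * h2 + 2 * h1
          have h4 : v 1 * (x * y - 4) = 0 := by linear_combination y * h1 + 2 * h2
          have hne : x * y - 4 ≠ 0 := sub_ne_zero.mpr hxy
          have hv0 : v 0 = 0 := by
            rcases mul_eq_zero.mp h3 with h | h
            · exact h
            · exact absurd h hne
          have hv1 : v 1 = 0 := by
            rcases mul_eq_zero.mp h4 with h | h
            · exact h
            · exact absurd h hne
          apply hvne
          rw [hdecomp v, hv0, hv1]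
          simp
        · apply top_of_βt
          have := p.smul_mem (y * v 0 - 2 * v 1)⁻¹ hB
          rwa [smul_smul, inv_mul_cancel₀ h2, one_smul] at this
      · apply top_of_βr
        have := p.smul_mem (x * v 1 - 2 * v 0)⁻¹ hA
        rwa [smul_smul, inv_mul_cancel₀ h1, one_smul] at this
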